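/- Let q be a prime power, let m ≥ 2, and let S be a subset of F_q^* of size q-1-m. Write P(X) = \prod_{a ∈ S}(X - a) = \sum_{i=0}^{q-1-m} b_i X^i. Then there exists k in {1, ..., q-2m} such that b_k = b_{k+1} = ... = b_{k+m-2} = 0 if and only if F_q^* \ S is contained in a coset γH for some γ in F_q^* and some proper multiplicative subgroup H of F_q^*. -/

import Mathlib

open Polynomial Finset

private lemma kw_prod_X_sub_C_dvd_of_roots {F : Type*} [Field F] (T : Finset F) :
    ∀ g : Polynomial F, (∀ t ∈ T, g.eval t = 0) → (∏ t ∈ T, (X - C t)) ∣ g := by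
  classical
  induction T using Finset.induction_on with
  | empty => intro g _; simp
  | @insert a T ha ih =>
    intro g hg
    have h1 : (X - C a) ∣ g := dvd_iff_isRoot.mpr (hg a (mem_insert_self a T))
    obtain ⟨g1, rfl⟩ := h1
    rw [Finset.prod_insert ha]
    refine mul_dvd_mul_left _ (ih g1 fun t ht => ?_)
    have hta : t ≠ a := fun h => ha (h ▸ ht)
    have h2 := hg t (mem_insert_of_mem ht)
    rw [eval_mul, eval_sub, eval_X, eval_C] at h2
    rcases mul_eq_zero.mp h2 with h | h
    · exact absurd (sub_eq_zero.mp h) hta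
    · exact h

/-- **Theorem 2 (Kopparty–Wang).** Let `S ⊆ F_q^*` with `|S| = q-1-m`, `m ≥ 2`, and let
`P(X) = ∏_{a ∈ S} (X - a) = ∑ b_i X^i`. There exists `k ∈ {1,…,q-2m}` with
`b_k = ⋯ = b_{k+m-2} = 0` if and only if `F_q^* \ S` is contained in a coset `γH` of a
proper multiplicative subgroup `H` of `F_q^*`. -/
theorem zero_run_iff_complement_in_coset
    {F : Type*} [Field F] [Fintype F] {q m : ℕ} (hq : Fintype.card F = q)
    (hm : 2 ≤ m) (S : Finset F) (hS0 : (0 : F) ∉ S) (hcard : S.card = q - 1 - m)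
    (P : Polynomial F) (hP : P = ∏ a ∈ S, (Polynomial.X - Polynomial.C a)) :
    (∃ k, 1 ≤ k ∧ k ≤ q - 2 * m ∧ ∀ j ≤ m - 2, P.coeff (k + j) = 0) ↔
      (∃ γ : Fˣ, ∃ H : Subgroup Fˣ, H ≠ ⊤ ∧
        ∀ x : Fˣ, (x : F) ∉ S → ∃ h ∈ H, x = γ * h) := by
  classical
  have hq2 : 2 ≤ q := by rw [← hq]; exact Fintype.one_lt_card
  set T : Finset F := univ.filter (fun x => x ≠ 0 ∧ x ∉ S) with hT
  have hmemT : ∀ x : F, x ∈ T ↔ x ≠ 0 ∧ x ∉ S := by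
    intro x; simp [hT]
  have hTq : S.card + 1 + T.card = q := by
    have h1 : T = (insert (0:F) S)ᶜ := by
      ext x
      simp only [hmemT, Finset.mem_compl, Finset.mem_insert]
      tauto
    have h2 : (insert (0:F) S)ᶜ.card = Fintype.card F - (insert (0:F) S).card :=
      Finset.card_compl _
    have h3 : (insert (0:F) S).card = S.card + 1 := Finset.card_insert_of_notMem hS0
    have h4 : (insert (0:F) S).card ≤ Fintype.card F := Finset.card_le_univ _
    rw [h1, h2, h3] at *
    omega
  -- bound on proper subgroups
  have hHbound : ∀ H : Subgroup Fˣ, H ≠ ⊤ → 2 * Nat.card H ≤ q - 1 := by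
    intro H hH
    have hdvd : Nat.card H ∣ Nat.card Fˣ := Subgroup.card_subgroup_dvd_card H
    have hcardU : Nat.card Fˣ = q - 1 := by
      rw [Nat.card_units, Nat.card_eq_fintype_card, hq]
    have hne : Nat.card H ≠ q - 1 := by
      intro h
      exact hH (Subgroup.eq_top_of_card_eq H (by rw [h, hcardU]))
    rw [hcardU] at hdvd
    have h0 : Nat.card H ≠ 0 := Nat.card_pos.ne'
    obtain ⟨e, he⟩ := hdvd
    rcases Nat.lt_or_ge e 2 with h2 | h2
    · interval_cases e <;> omega
    · have := Nat.mul_le_mul_left (Nat.card H) h2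
      omega
  -- coset covering gives a cardinality bound
  have hcover_card : ∀ (γ : Fˣ) (H : Subgroup Fˣ),
      (∀ x : Fˣ, (x : F) ∉ S → ∃ h ∈ H, x = γ * h) → T.card ≤ Nat.card H := by
    intro γ H hcov
    have hsub : T ⊆ Finset.image (fun h : Fˣ => ((γ * h : Fˣ) : F))
        (Set.toFinset (H : Set Fˣ)) := by
      intro t ht
      obtain ⟨ht0, htS⟩ := (hmemT t).1 ht
      obtain ⟨h, hh, hx⟩ := hcov (Units.mk0 t ht0) htS
      refine Finset.mem_image.mpr ⟨h, by simpa using hh, ?_⟩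
      rw [← hx]; rfl
    calc T.card ≤ _ := Finset.card_le_card hsub
      _ ≤ (Set.toFinset (H : Set Fˣ)).card := Finset.card_image_le
      _ = Nat.card H := by simp [Set.toFinset_card, Nat.card_eq_fintype_card]
  rcases le_or_gt q (2*m) with hqm | hqm
  · -- degenerate case: both sides false
    constructor
    · rintro ⟨k, hk1, hk2, -⟩
      exfalso; omega
    · rintro ⟨γ, H, hH, hcov⟩
      exfalso
      have h1 := hcover_card γ H hcov
      have h2 := hHbound H hH
      omega
  -- main case
  have hTm : T.card = m := by omega
  set Q : Polynomial F := ∏ t ∈ T, (X - C t) with hQdef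
  have hQmonic : Q.Monic := monic_prod_of_monic _ _ fun t _ => monic_X_sub_C t
  have hQ0 : Q ≠ 0 := hQmonic.ne_zero
  have hQdeg : Q.natDegree = m := by
    rw [hQdef, natDegree_prod _ _ fun t _ => X_sub_C_ne_zero t]
    simp [natDegree_X_sub_C, hTm]
  have hST : Disjoint S T := by
    rw [Finset.disjoint_left]
    intro a haS haT
    exact ((hmemT a).1 haT).2 haS
  have hSTunion : S ∪ T = ({0}ᶜ : Finset F) := by
    ext x
    simp only [Finset.mem_union, hmemT, Finset.mem_compl, Finset.mem_singleton]
    constructor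
    · rintro (h | ⟨h, -⟩)
      · exact fun h0 => hS0 (h0 ▸ h)
      · exact h
    · intro hx0
      by_cases hxS : x ∈ S
      · exact Or.inl hxS
      · exact Or.inr ⟨hx0, hxS⟩
  have hprodall : ∏ a ∈ ({0}ᶜ : Finset F), (X - C a) = (X : Polynomial F)^(q-1) - 1 := by
    have hdvd : (∏ a ∈ ({0}ᶜ : Finset F), (X - C a)) ∣ ((X : Polynomial F)^(q-1) - 1) := by
      apply kw_prod_X_sub_C_dvd_of_roots
      intro t ht
      have ht0 : t ≠ 0 := by simpa using ht
      have h1 : t ^ (q - 1) = 1 := by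
        rw [← hq]; exact FiniteField.pow_card_sub_one_eq_one t ht0
      simp [h1]
    have hmonic1 : (∏ a ∈ ({0}ᶜ : Finset F), (X - C a)).Monic :=
      monic_prod_of_monic _ _ fun t _ => monic_X_sub_C t
    have hmonic2 : ((X : Polynomial F)^(q-1) - 1).Monic := by
      have := monic_X_pow_sub_C (1 : F) (n := q-1) (by omega)
      simpa using this
    refine eq_of_dvd_of_natDegree_le_of_leadingCoeff hdvd ?_ ?_
    · rw [natDegree_prod _ _ fun t _ => X_sub_C_ne_zero t]
      have h1 : ((X : Polynomial F)^(q-1) - 1).natDegree = q - 1 := by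
        have := natDegree_X_pow_sub_C (n := q-1) (r := (1:F))
        simpa using this
      have h2 : ({0}ᶜ : Finset F).card = q - 1 := by
        rw [Finset.card_compl, Finset.card_singleton, hq]
      simp only [natDegree_X_sub_C, Finset.sum_const, smul_eq_mul, mul_one, h1, h2, le_refl]
    · rw [hmonic1.leadingCoeff, hmonic2.leadingCoeff]
  have hPQ : P * Q = (X : Polynomial F)^(q-1) - 1 := by
    rw [hP, hQdef, ← Finset.prod_union hST, hSTunion, hprodall]
  have hQroot : ∀ t ∈ T, Q.eval t = 0 := by
    intro t ht
    rw [hQdef, eval_prod]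
    exact Finset.prod_eq_zero ht (by simp)
  have hQ0eval : Q.eval 0 ≠ 0 := by
    rw [hQdef, eval_prod]
    refine Finset.prod_ne_zero_iff.mpr fun t ht => ?_
    simp only [eval_sub, eval_X, eval_C, zero_sub, ne_eq, neg_eq_zero]
    exact ((hmemT t).1 ht).1
  have hcop : IsCoprime (X : Polynomial F) Q := by
    refine ⟨-(Q /ₘ X) * C (Q.eval 0)⁻¹, C (Q.eval 0)⁻¹, ?_⟩
    have h1 : Q %ₘ X = C (Q.eval 0) := modByMonic_X Q
    have h2 : Q %ₘ X + X * (Q /ₘ X) = Q := modByMonic_add_div Q X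
    have h3 : (C (Q.eval 0)⁻¹ : Polynomial F) * C (Q.eval 0) = 1 := by
      rw [← C_mul, inv_mul_cancel₀ hQ0eval, C_1]
    linear_combination (-(C (Q.eval 0)⁻¹ : Polynomial F)) * h2 + (C (Q.eval 0)⁻¹ : Polynomial F) * h1 + h3
  -- zero-run ⟹ power condition
  have runToMid : ∀ k, 1 ≤ k → k ≤ q - 2*m → (∀ j ≤ m-2, P.coeff (k+j) = 0) →
      ∃ n c, m ≤ n ∧ n + m + 1 ≤ q ∧ c ≠ 0 ∧ ∀ t ∈ T, t ^ n = c := by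
    intro k hk1 hk2 hz
    set n := k + m - 1 with hn
    have hnq : n + m + 1 ≤ q := by omega
    have hnm : m ≤ n := by omega
    set D := P /ₘ (X ^ n) with hD
    set A := P %ₘ (X ^ n) with hA
    have hmonX : ((X : Polynomial F)^n).Monic := monic_X_pow n
    have hPAD : A + X^n * D = P := modByMonic_add_div P (X^n)
    have hAdeg : A.natDegree ≤ k - 1 := by
      refine natDegree_le_iff_coeff_eq_zero.mpr fun i hi => ?_
      by_cases hin : n ≤ i
      · refine coeff_eq_zero_of_degree_lt (lt_of_lt_of_le (degree_modByMonic_lt P hmonX) ?_)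
        rw [degree_X_pow]
        exact_mod_cast Nat.cast_le.mpr hin
      · push_neg at hin
        have hAi : A.coeff i = P.coeff i := by
          have h0 : (X^n * D).coeff i = 0 := by
            rw [mul_comm, coeff_mul_X_pow']
            simp [Nat.not_le.mpr hin]
          rw [← hPAD, coeff_add, h0, add_zero]
        rw [hAi]
        have hik : k + (i - k) = i := by omega
        have := hz (i - k) (by omega)
        rwa [hik] at this
    have hAQdeg : (A * Q).natDegree ≤ n := by
      refine le_trans natDegree_mul_le ?_
      rw [hQdeg]
      omega
    set c := (A * Q).coeff n with hc
    have hAQ : A * Q = C c * X ^ n - 1 := by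
      ext i
      rcases lt_trichotomy i n with hi | hi | hi
      · have h1 : (A * Q).coeff i = (P * Q).coeff i := by
          have h2 : P * Q = A * Q + X^n * (D * Q) := by rw [← hPAD]; ring
          have h3 : (X^n * (D*Q)).coeff i = 0 := by
            rw [mul_comm, coeff_mul_X_pow']
            simp [Nat.not_le.mpr hi]
          rw [h2, coeff_add, h3, add_zero]
        rw [h1, hPQ]
        rw [coeff_sub, coeff_sub, coeff_X_pow, coeff_C_mul, coeff_X_pow,
          if_neg (by omega : ¬ i = q-1), if_neg (by omega : ¬ i = n), mul_zero]
      · rw [hi, coeff_sub, coeff_C_mul, coeff_X_pow, if_pos rfl, mul_one, coeff_one,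
          if_neg (by omega : ¬ n = 0), sub_zero]
      · rw [coeff_eq_zero_of_natDegree_lt (lt_of_le_of_lt hAQdeg hi)]
        rw [coeff_sub, coeff_C_mul, coeff_X_pow, if_neg (by omega : ¬ i = n), mul_zero,
          coeff_one, if_neg (by omega : ¬ i = 0), sub_zero]
    have hc0 : c ≠ 0 := by
      intro h0
      rw [h0, map_zero, zero_mul, zero_sub] at hAQ
      have hA0 : A ≠ 0 := by
        intro h
        rw [h, zero_mul] at hAQ
        exact one_ne_zero (neg_eq_zero.mp hAQ.symm)
      have h1 : A.natDegree + Q.natDegree = 0 := by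
        rw [← natDegree_mul hA0 hQ0, hAQ]
        simp
      rw [hQdeg] at h1
      omega
    refine ⟨n, c⁻¹, hnm, hnq, inv_ne_zero hc0, fun t ht => ?_⟩
    have h1 : A.eval t * Q.eval t = c * t ^ n - 1 := by
      have := congrArg (eval t) hAQ
      simpa using this
    rw [hQroot t ht, mul_zero] at h1
    exact eq_inv_of_mul_eq_one_right (sub_eq_zero.mp h1.symm)
  -- power condition ⟹ zero-run
  have midToRun : ∀ n c, m ≤ n → n + m + 1 ≤ q → c ≠ 0 → (∀ t ∈ T, t ^ n = c) →
      ∃ k, 1 ≤ k ∧ k ≤ q - 2 * m ∧ ∀ j ≤ m - 2, P.coeff (k + j) = 0 := by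
    intro n c hnm hnq hc0 hTn
    set k := n - m + 1 with hk
    have hdvd1 : Q ∣ X ^ n - C c := by
      rw [hQdef]
      apply kw_prod_X_sub_C_dvd_of_roots
      intro t ht
      simp [hTn t ht]
    obtain ⟨A1, hA1⟩ := hdvd1
    have hdvd2 : Q ∣ (X : Polynomial F)^(q-1) - 1 := ⟨P, by rw [← hPQ]; ring⟩
    have hsplit : (X : Polynomial F)^(q-1) - 1 - (X^n - C c) * C c⁻¹
        = X^n * (X^(q-1-n) - C c⁻¹) := by
      have hpow : (X : Polynomial F)^n * X^(q-1-n) = X^(q-1) := by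
        rw [← pow_add]; congr 1; omega
      have hCc : (C c : Polynomial F) * C c⁻¹ = 1 := by
        rw [← C_mul, mul_inv_cancel₀ hc0, C_1]
      calc (X : Polynomial F)^(q-1) - 1 - (X^n - C c) * C c⁻¹
          = X^n * X^(q-1-n) - C c * C c⁻¹ - (X^n - C c) * C c⁻¹ := by rw [hpow, hCc]
        _ = X^n * (X^(q-1-n) - C c⁻¹) := by ring
    have hdvd3 : Q ∣ X^n * ((X : Polynomial F)^(q-1-n) - C c⁻¹) := by
      rw [← hsplit]
      exact dvd_sub hdvd2 (Dvd.dvd.mul_right ⟨A1, hA1⟩ _)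
    have hdvd4 : Q ∣ (X : Polynomial F)^(q-1-n) - C c⁻¹ :=
      ((hcop.pow_left (m := n)).symm).dvd_of_dvd_mul_left hdvd3
    obtain ⟨B1, hB1⟩ := hdvd4
    have hPeq : P = A1 * C c⁻¹ + X ^ n * B1 := by
      have hmul : (A1 * C c⁻¹ + X ^ n * B1) * Q = P * Q := by
        rw [hPQ]
        calc (A1 * C c⁻¹ + X^n * B1) * Q = (Q * A1) * C c⁻¹ + X^n * (Q * B1) := by ring
          _ = (X^n - C c) * C c⁻¹ + X^n * ((X : Polynomial F)^(q-1-n) - C c⁻¹) := by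
              rw [← hA1, ← hB1]
          _ = (X : Polynomial F)^(q-1) - 1 := by rw [← hsplit]; ring
      exact (mul_right_cancel₀ hQ0 hmul).symm
    have hA1ne : A1 ≠ 0 := by
      intro h
      rw [h, mul_zero] at hA1
      exact X_pow_sub_C_ne_zero (by omega : 0 < n) c hA1
    have hdegQA : Q.natDegree + A1.natDegree = n := by
      rw [← natDegree_mul hQ0 hA1ne, ← hA1, natDegree_X_pow_sub_C]
    have hA1deg : (A1 * C c⁻¹).natDegree ≤ n - m := by
      refine le_trans natDegree_mul_le ?_
      rw [natDegree_C]
      omega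
    refine ⟨k, by omega, by omega, fun j hj => ?_⟩
    rw [hPeq, coeff_add]
    have h5 : (A1 * C c⁻¹).coeff (k + j) = 0 :=
      coeff_eq_zero_of_natDegree_lt (by omega)
    have h6 : (X^n * B1).coeff (k + j) = 0 := by
      rw [mul_comm, coeff_mul_X_pow']
      simp only [if_neg (by omega : ¬ n ≤ k + j)]
    rw [h5, h6, add_zero]
  -- power condition ⟹ coset
  have midToCoset : ∀ (n : ℕ) (c : F), m ≤ n → n + m + 1 ≤ q → c ≠ 0 →
      (∀ t ∈ T, t ^ n = c) →
      ∃ γ : Fˣ, ∃ H : Subgroup Fˣ, H ≠ ⊤ ∧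
        ∀ x : Fˣ, (x : F) ∉ S → ∃ h ∈ H, x = γ * h := by
    intro n c hnm hnq hc0 hTn
    have hTne : T.Nonempty := by
      rw [← Finset.card_pos, hTm]; omega
    obtain ⟨t₀, ht₀⟩ := hTne
    have ht₀0 : t₀ ≠ 0 := ((hmemT t₀).1 ht₀).1
    refine ⟨Units.mk0 t₀ ht₀0, (powMonoidHom n : Fˣ →* Fˣ).ker, ?_, ?_⟩
    · intro htop
      obtain ⟨g, hg⟩ := IsCyclic.exists_generator (α := Fˣ)
      have hgmem : g ∈ (powMonoidHom n : Fˣ →* Fˣ).ker := htop ▸ Subgroup.mem_top g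
      rw [MonoidHom.mem_ker, powMonoidHom_apply] at hgmem
      have hord : orderOf g = q - 1 := by
        rw [orderOf_eq_card_of_forall_mem_zpowers hg, Nat.card_units,
          Nat.card_eq_fintype_card, hq]
      have hdvd := orderOf_dvd_of_pow_eq_one hgmem
      rw [hord] at hdvd
      have := Nat.le_of_dvd (by omega) hdvd
      omega
    · intro x hx
      have hxT : (x : F) ∈ T := (hmemT _).2 ⟨Units.ne_zero x, hx⟩
      refine ⟨(Units.mk0 t₀ ht₀0)⁻¹ * x, ?_, (mul_inv_cancel_left _ _).symm⟩
      rw [MonoidHom.mem_ker, powMonoidHom_apply]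
      have key : (((Units.mk0 t₀ ht₀0)⁻¹ * x : Fˣ) : F) ^ n = 1 := by
        have h1 : (((Units.mk0 t₀ ht₀0)⁻¹ * x : Fˣ) : F) = t₀⁻¹ * (x : F) := by
          simp
        rw [h1, mul_pow, inv_pow, hTn _ ht₀, hTn _ hxT, inv_mul_cancel₀ hc0]
      exact Units.ext (by rw [Units.val_pow_eq_pow_val, key, Units.val_one])
  -- coset ⟹ power condition
  have cosetToMid : ∀ (γ : Fˣ) (H : Subgroup Fˣ), H ≠ ⊤ →
      (∀ x : Fˣ, (x : F) ∉ S → ∃ h ∈ H, x = γ * h) →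
      ∃ n c, m ≤ n ∧ n + m + 1 ≤ q ∧ c ≠ 0 ∧ ∀ t ∈ T, t ^ n = c := by
    intro γ H hH hcov
    have hdbound := hHbound H hH
    have hdm : m ≤ Nat.card H := by
      have := hcover_card γ H hcov
      omega
    refine ⟨Nat.card H, (γ : F) ^ Nat.card H, hdm, by omega,
      pow_ne_zero _ (Units.ne_zero γ), fun t ht => ?_⟩
    obtain ⟨ht0, htS⟩ := (hmemT t).1 ht
    obtain ⟨h, hhH, hxh⟩ := hcov (Units.mk0 t ht0) htS
    have hh1 : h ^ Nat.card H = 1 := by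
      have h1 : (⟨h, hhH⟩ : H) ^ Nat.card H = 1 := pow_card_eq_one'
      have h2 := congrArg (H.subtype) h1
      rw [map_pow, map_one] at h2
      exact h2
    have hth : t = (γ : F) * (h : F) := by
      have := congrArg (Units.val) hxh
      simpa using this
    rw [hth, mul_pow]
    have h2 : ((h : Fˣ) : F) ^ Nat.card H = 1 := by
      rw [← Units.val_pow_eq_pow_val, hh1, Units.val_one]
    rw [h2, mul_one]
  constructor
  · rintro ⟨k, hk1, hk2, hz⟩
    obtain ⟨n, c, h1, h2, h3, h4⟩ := runToMid k hk1 hk2 hz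
    exact midToCoset n c h1 h2 h3 h4
  · rintro ⟨γ, H, hH, hcov⟩
    obtain ⟨n, c, h1, h2, h3, h4⟩ := cosetToMid γ H hH hcov
    exact midToRun n c h1 h2 h3 h4
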